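/- For all natural numbers ν, m, n with m+n > 0 and every rational x, one has ∑_{j=0}^{m} C(m, j)·C(n+j, ν)·B_{n+j−ν}(x) = ∑_{k=0}^{n} (−1)^{n−k}·C(n, k)·C(m+k, ν)·B_{m+k−ν}(x+1). (In any term where the subscript n+j−ν or m+k−ν would be negative, the binomial coefficient C(n+j,ν) resp. C(m+k,ν) is 0, so the term vanishes and natural-number subtraction in the subscript is harmless.) -/
import Mathlib

open Finset Polynomial

lemma aux_base (m : ℕ) :
    ∑ j ∈ range (m + 1), (m.choose j : ℚ) • Polynomial.bernoulli j
      = (Polynomial.bernoulli m).comp (X + 1) := by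
  apply Polynomial.funext
  intro x
  rw [eval_comp]
  simp only [eval_finset_sum, eval_smul, eval_add, eval_X, eval_one, smul_eq_mul]
  cases m with
  | zero => simp
  | succ m' =>
    rw [Finset.sum_range_succ]
    have h := congrArg (fun p => Polynomial.eval x p) (Polynomial.sum_bernoulli m')
    simp only [eval_finset_sum, eval_smul, smul_eq_mul, eval_monomial] at h
    rw [h, Nat.choose_self, Nat.cast_one, one_mul]
    have h2 := Polynomial.bernoulli_eval_one_add (m' + 1) x
    rw [add_comm x 1, h2]
    push_cast
    ring

lemma aux_recL (m n : ℕ) :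
    ∑ j ∈ range (m + 1 + 1), ((m + 1).choose j : ℚ) • Polynomial.bernoulli (n + j)
      = (∑ j ∈ range (m + 1), (m.choose j : ℚ) • Polynomial.bernoulli (n + j))
        + ∑ j ∈ range (m + 1), (m.choose j : ℚ) • Polynomial.bernoulli (n + 1 + j) := by
  rw [Finset.sum_range_succ' (fun j => (((m+1).choose j : ℚ)) • Polynomial.bernoulli (n + j)) (m+1),
      Finset.sum_range_succ' (fun j => ((m.choose j : ℚ)) • Polynomial.bernoulli (n + j)) m]
  simp only [Nat.choose_succ_succ, Nat.cast_add, add_smul, Finset.sum_add_distrib]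
  have e1 : ∀ s : Finset ℕ, ∀ f : ℕ → ℚ,
      ∑ j ∈ s, f j • Polynomial.bernoulli (n + (j + 1))
        = ∑ j ∈ s, f j • Polynomial.bernoulli (n + 1 + j) := by
    intro s f; apply Finset.sum_congr rfl; intro j _
    have : n + (j + 1) = n + 1 + j := by omega
    rw [this]
  rw [e1, e1, e1]
  simp only [Nat.choose_zero_right, Nat.cast_one, one_smul, add_zero]
  rw [Finset.sum_range_succ (fun j => ((m.choose (j+1) : ℚ)) • Polynomial.bernoulli (n + 1 + j)) m]
  simp only [Nat.choose_succ_self, Nat.cast_zero, zero_smul, add_zero]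
  abel

lemma aux_recR (F : ℕ → Polynomial ℚ) (m n : ℕ) :
    ∑ k ∈ range (n + 1 + 1), ((-1:ℚ)^(n+1-k) * ((n+1).choose k)) • F (m + k)
      = (∑ k ∈ range (n + 1), ((-1:ℚ)^(n-k) * (n.choose k)) • F (m + 1 + k))
        - ∑ k ∈ range (n + 1), ((-1:ℚ)^(n-k) * (n.choose k)) • F (m + k) := by
  rw [Finset.sum_range_succ' (fun k => ((-1:ℚ)^(n+1-k) * ((n+1).choose k)) • F (m + k)) (n+1)]
  simp only [Nat.succ_sub_succ, Nat.choose_succ_succ, Nat.cast_add, mul_add, add_smul,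
    Finset.sum_add_distrib, Nat.choose_zero_right, Nat.cast_one, mul_one, Nat.sub_zero]
  have e1 : ∀ f : ℕ → ℚ,
      ∑ k ∈ range (n+1), f k • F (m + (k + 1)) = ∑ k ∈ range (n+1), f k • F (m + 1 + k) := by
    intro f; apply Finset.sum_congr rfl; intro k _
    have : m + (k + 1) = m + 1 + k := by omega
    rw [this]
  rw [e1, e1]
  have hB : (∑ k ∈ range (n+1), ((-1:ℚ)^(n-k) * (n.choose (k+1))) • F (m + 1 + k))
        + ((-1:ℚ)^(n+1)) • F (m + 0)
      = - ∑ k ∈ range (n+1), ((-1:ℚ)^(n-k) * (n.choose k)) • F (m + k) := by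
    have h := Finset.sum_range_succ' (fun k => ((-1:ℚ)^(n+1-k) * (n.choose k)) • F (m + k)) (n+1)
    rw [Finset.sum_range_succ] at h
    simp only [Nat.choose_succ_self, Nat.cast_zero, mul_zero, zero_smul, add_zero,
      Nat.succ_sub_succ, Nat.choose_zero_right, Nat.cast_one, mul_one, Nat.sub_zero] at h
    rw [e1] at h
    simp only [Nat.add_zero]
    rw [← h]
    have : ∑ k ∈ range (n+1), ((-1:ℚ)^(n+1-k) * (n.choose k)) • F (m + k)
        = ∑ k ∈ range (n+1), -(((-1:ℚ)^(n-k) * (n.choose k)) • F (m + k)) := by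
      apply Finset.sum_congr rfl; intro k hk
      rw [Finset.mem_range] at hk
      have hnk : n + 1 - k = (n - k) + 1 := by omega
      rw [hnk, pow_succ]
      rw [← neg_smul]; ring_nf
    rw [this, Finset.sum_neg_distrib]
  rw [add_assoc, hB]
  abel

lemma aux_key (n : ℕ) : ∀ m : ℕ,
    ∑ j ∈ range (m + 1), (m.choose j : ℚ) • Polynomial.bernoulli (n + j)
      = ∑ k ∈ range (n + 1),
          ((-1:ℚ)^(n-k) * (n.choose k)) • (Polynomial.bernoulli (m + k)).comp (X + 1) := by
  induction n with
  | zero =>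
    intro m
    simp only [zero_add, range_one, Finset.sum_singleton, Nat.zero_sub, pow_zero,
      Nat.choose_self, Nat.cast_one, mul_one, one_smul, add_zero]
    simpa using aux_base m
  | succ n ih =>
    intro m
    have hstep : ∑ j ∈ range (m + 1), (m.choose j : ℚ) • Polynomial.bernoulli (n + 1 + j)
        = (∑ j ∈ range (m + 1 + 1), ((m + 1).choose j : ℚ) • Polynomial.bernoulli (n + j))
          - ∑ j ∈ range (m + 1), (m.choose j : ℚ) • Polynomial.bernoulli (n + j) := by
      rw [aux_recL]; abel
    rw [hstep, ih (m + 1), ih m,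
      ← aux_recR (fun l => (Polynomial.bernoulli l).comp (X + 1)) m n]

lemma aux_deriv (ν l : ℕ) :
    Polynomial.derivative^[ν] (Polynomial.bernoulli l)
      = ((ν.factorial * l.choose ν : ℕ) : ℚ) • Polynomial.bernoulli (l - ν) := by
  induction ν with
  | zero => simp
  | succ ν ih =>
    rw [Function.iterate_succ_apply', ih, derivative_smul, Polynomial.derivative_bernoulli]
    have hidx : l - ν - 1 = l - (ν + 1) := by omega
    have hnat : (ν.factorial * l.choose ν) * (l - ν)
        = (ν + 1).factorial * l.choose (ν + 1) := by
      have h := Nat.choose_succ_right_eq l ν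
      rw [Nat.factorial_succ, mul_assoc, ← h]
      ring
    rw [hidx]
    rw [show ((l - ν : ℕ) : Polynomial ℚ) * Polynomial.bernoulli (l - (ν+1))
        = ((l - ν : ℕ) : ℚ) • Polynomial.bernoulli (l - (ν+1)) by
      rw [Polynomial.smul_eq_C_mul, Polynomial.C_eq_natCast]]
    rw [smul_smul, ← Nat.cast_mul, hnat]

lemma aux_deriv_comp (ν : ℕ) (p : Polynomial ℚ) :
    Polynomial.derivative^[ν] (p.comp (X + 1))
      = (Polynomial.derivative^[ν] p).comp (X + 1) := by
  induction ν generalizing p with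
  | zero => rfl
  | succ ν ih =>
    rw [Function.iterate_succ_apply, Function.iterate_succ_apply, Polynomial.derivative_comp]
    simp [ih]

theorem bernoulli_poly_shift_identity (ν m n : ℕ) (hmn : 0 < m + n) (x : ℚ) :
    ∑ j ∈ Finset.range (m + 1),
      (m.choose j : ℚ) * ((n + j).choose ν) * (Polynomial.bernoulli (n + j - ν)).eval x
    = ∑ k ∈ Finset.range (n + 1),
        (-1 : ℚ) ^ (n - k) * (n.choose k) * ((m + k).choose ν) *
          (Polynomial.bernoulli (m + k - ν)).eval (x + 1) := by
  have hkey := aux_key n m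
  set D : Polynomial ℚ →ₗ[ℚ] Polynomial ℚ := (Polynomial.derivative : Polynomial ℚ →ₗ[ℚ] Polynomial ℚ) ^ ν with hD
  have h := congrArg (fun p : Polynomial ℚ => (D p).eval x) hkey
  simp only [map_sum, map_smul, hD, Module.End.pow_apply, eval_finset_sum, eval_smul,
    smul_eq_mul] at h
  simp only [aux_deriv, aux_deriv_comp, eval_smul, smul_eq_mul, eval_comp, eval_add, eval_X,
    eval_one] at h
  have hfac : (ν.factorial : ℚ) ≠ 0 := by
    exact_mod_cast ν.factorial_ne_zero
  apply mul_left_cancel₀ hfac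
  rw [Finset.mul_sum, Finset.mul_sum]
  calc ∑ j ∈ range (m + 1), (ν.factorial : ℚ) *
          ((m.choose j : ℚ) * ((n + j).choose ν) * (Polynomial.bernoulli (n + j - ν)).eval x)
      = ∑ j ∈ range (m + 1), (m.choose j : ℚ) *
          (((ν.factorial * (n + j).choose ν : ℕ) : ℚ) * (Polynomial.bernoulli (n + j - ν)).eval x) := by
        apply Finset.sum_congr rfl; intro j _; push_cast; ring
    _ = ∑ k ∈ range (n + 1), ((-1:ℚ)^(n-k) * (n.choose k)) *
          (((ν.factorial * (m + k).choose ν : ℕ) : ℚ) * (Polynomial.bernoulli (m + k - ν)).eval (x + 1)) := h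
    _ = ∑ k ∈ range (n + 1), (ν.factorial : ℚ) *
          ((-1 : ℚ) ^ (n - k) * (n.choose k) * ((m + k).choose ν) *
            (Polynomial.bernoulli (m + k - ν)).eval (x + 1)) := by
        apply Finset.sum_congr rfl; intro k _; push_cast; ring
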